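/- For the set M as above, the vector graph V_M contains a subgraph isomorphic to the Moser spindle; consequently χ(V_M) ≥ 4, and combined with 4-colorability, χ(V_M) = 4. -/

import Mathlib

noncomputable def rot (θ : ℝ) (u : ℂ) : ℂ := Complex.exp (θ * Complex.I) * u
noncomputable def angA : ℝ := Real.arccos (1 / (2 * Real.sqrt 3)) - Real.pi / 6
noncomputable def angB : ℝ := angA + Real.pi / 3

def MoserSpindle : SimpleGraph (Fin 7) :=
  SimpleGraph.fromRel (fun i j => (i, j) ∈
    ([(0,1),(0,2),(1,2),(1,3),(2,3),(0,4),(0,5),(4,5),(4,6),(5,6),(3,6)] : List (Fin 7 × Fin 7)))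

noncomputable def Mset (u : ℂ) : Set ℂ :=
  {u, rot angA u, rot (-angA) u, rot angB u, rot (-angB) u,
   rot angA u - rot angB u, rot (-angA) u - rot (-angB) u}

noncomputable def VM (u : ℂ) : SimpleGraph (Submodule.span ℤ (Mset u)) :=
  SimpleGraph.fromRel (fun x y => (x : ℂ) - (y : ℂ) ∈ Mset u)

/-! ### Auxiliary real computations -/

lemma s3_pos : (0:ℝ) < Real.sqrt 3 := Real.sqrt_pos.mpr (by norm_num)
lemma s3_sq : Real.sqrt 3 ^ 2 = 3 := Real.sq_sqrt (by norm_num)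
lemma s11_pos : (0:ℝ) < Real.sqrt 11 := Real.sqrt_pos.mpr (by norm_num)
lemma s11_sq : Real.sqrt 11 ^ 2 = 11 := Real.sq_sqrt (by norm_num)
lemma s33_eq : Real.sqrt 33 = Real.sqrt 3 * Real.sqrt 11 := by
  rw [← Real.sqrt_mul (by norm_num)]; norm_num

lemma s3_ge1 : (1:ℝ) ≤ Real.sqrt 3 := by nlinarith [s3_sq, s3_pos]

lemma cos_arc : Real.cos (Real.arccos (1 / (2 * Real.sqrt 3))) = 1 / (2 * Real.sqrt 3) := by
  apply Real.cos_arccos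
  · have := s3_pos; have : (0:ℝ) < 1 / (2*Real.sqrt 3) := by positivity
    linarith
  · rw [div_le_one (by positivity)]; linarith [s3_ge1]

lemma sin_arc : Real.sin (Real.arccos (1 / (2 * Real.sqrt 3)))
    = Real.sqrt 11 / (2 * Real.sqrt 3) := by
  rw [Real.sin_arccos]
  have h : 1 - (1 / (2 * Real.sqrt 3))^2 = (Real.sqrt 11 / (2 * Real.sqrt 3))^2 := by
    have h3 := s3_sq; have h11 := s11_sq; have := s3_pos
    field_simp
    nlinarith [h3, h11]
  rw [h, Real.sqrt_sq (by positivity)]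

lemma cosA : Real.cos angA = (3 + Real.sqrt 33)/12 := by
  unfold angA
  rw [Real.cos_sub, cos_arc, sin_arc, Real.cos_pi_div_six, Real.sin_pi_div_six, s33_eq]
  have h3 := s3_sq; have := s3_pos
  field_simp
  ring_nf
  nlinarith [s3_sq, s11_sq, s3_pos, s11_pos]

lemma sinA : Real.sin angA = (3*Real.sqrt 11 - Real.sqrt 3)/12 := by
  unfold angA
  rw [Real.sin_sub, cos_arc, sin_arc, Real.cos_pi_div_six, Real.sin_pi_div_six]
  have h3 := s3_sq; have := s3_pos
  field_simp
  ring_nf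
  nlinarith [s3_sq, s11_sq, s3_pos, s11_pos]

lemma cosB : Real.cos angB = (3 - Real.sqrt 33)/12 := by
  unfold angB
  rw [Real.cos_add, cosA, sinA, Real.cos_pi_div_three, Real.sin_pi_div_three, s33_eq]
  have h3 := s3_sq
  field_simp
  ring_nf
  nlinarith [s3_sq, s11_sq, s3_pos, s11_pos]

lemma sinB : Real.sin angB = (Real.sqrt 3 + 3*Real.sqrt 11)/12 := by
  unfold angB
  rw [Real.sin_add, cosA, sinA, Real.cos_pi_div_three, Real.sin_pi_div_three, s33_eq]
  have h3 := s3_sq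
  field_simp
  ring_nf
  nlinarith [s3_sq, s11_sq, s3_pos, s11_pos]

/-! ### The four basic complex numbers -/

noncomputable def zA : ℂ := ((3 + Real.sqrt 33)/12 : ℝ) + ((3*Real.sqrt 11 - Real.sqrt 3)/12 : ℝ) * Complex.I
noncomputable def zA' : ℂ := ((3 + Real.sqrt 33)/12 : ℝ) - ((3*Real.sqrt 11 - Real.sqrt 3)/12 : ℝ) * Complex.I
noncomputable def zB : ℂ := ((3 - Real.sqrt 33)/12 : ℝ) + ((Real.sqrt 3 + 3*Real.sqrt 11)/12 : ℝ) * Complex.I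
noncomputable def zB' : ℂ := ((3 - Real.sqrt 33)/12 : ℝ) - ((Real.sqrt 3 + 3*Real.sqrt 11)/12 : ℝ) * Complex.I

lemma exp_eq (θ : ℝ) : Complex.exp (θ * Complex.I) =
    (Real.cos θ : ℝ) + (Real.sin θ : ℝ) * Complex.I := by
  rw [Complex.exp_mul_I, Complex.ofReal_cos, Complex.ofReal_sin]

lemma rotA (u : ℂ) : rot angA u = zA * u := by
  rw [rot, exp_eq, cosA, sinA, zA]
lemma rotA' (u : ℂ) : rot (-angA) u = zA' * u := by
  rw [rot, exp_eq, Real.cos_neg, Real.sin_neg, cosA, sinA, zA']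
  push_cast; ring
lemma rotB (u : ℂ) : rot angB u = zB * u := by
  rw [rot, exp_eq, cosB, sinB, zB]
lemma rotB' (u : ℂ) : rot (-angB) u = zB' * u := by
  rw [rot, exp_eq, Real.cos_neg, Real.sin_neg, cosB, sinB, zB']
  push_cast; ring

lemma zrel : zA + zA' + zB + zB' = 1 := by
  unfold zA zA' zB zB'; push_cast; ring

lemma sqrt33_lin (p q : ℤ) (h : (p:ℝ) + q * Real.sqrt 33 = 0) : p = 0 ∧ q = 0 := by
  have hirr : Irrational (Real.sqrt 33) := by
    rw [show ((33:ℝ) = ((33:ℕ):ℝ)) by norm_num]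
    exact irrational_sqrt_natCast_iff.mpr (by
      rintro ⟨r, hr⟩
      have : r ≤ 6 := by nlinarith
      interval_cases r <;> omega)
  by_cases hq : q = 0
  · subst hq; simp at h; exact ⟨by exact_mod_cast h, rfl⟩
  · exfalso
    apply hirr
    refine ⟨(-p)/q, ?_⟩
    have hq' : (q:ℝ) ≠ 0 := Int.cast_ne_zero.mpr hq
    push_cast
    field_simp
    linarith

lemma indepz (n : Fin 4 → ℤ) (h : (n 0 : ℂ) * zA + n 1 * zA' + n 2 * zB + n 3 * zB' = 0) :
    n = 0 := by
  have hre := congrArg Complex.re h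
  have him := congrArg Complex.im h
  simp only [Complex.add_re, Complex.add_im, Complex.mul_re, Complex.mul_im,
    Complex.intCast_re, Complex.intCast_im, Complex.zero_re, Complex.zero_im,
    zA, zA', zB, zB', Complex.add_re, Complex.sub_re, Complex.sub_im,
    Complex.ofReal_re, Complex.ofReal_im, Complex.mul_I_re, Complex.mul_I_im,
    Complex.I_re, Complex.I_im] at hre him
  rw [s33_eq] at hre him
  have h1 : ((3*(n 0 + n 1 + n 2 + n 3) : ℤ) : ℝ)
      + ((n 0 + n 1 - n 2 - n 3 : ℤ) : ℝ) * Real.sqrt 33 = 0 := by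
    rw [s33_eq]; push_cast; linear_combination 12*hre
  have h2 : ((3*(- n 0 + n 1 + n 2 - n 3) : ℤ) : ℝ)
      + ((3*(n 0 - n 1 + n 2 - n 3) : ℤ) : ℝ) * Real.sqrt 33 = 0 := by
    rw [s33_eq]; push_cast
    linear_combination (12*Real.sqrt 3)*him + ((n 0 : ℝ) - n 1 - n 2 + n 3)*s3_sq
  obtain ⟨e1, e2⟩ := sqrt33_lin _ _ h1
  obtain ⟨e3, e4⟩ := sqrt33_lin _ _ h2
  funext i
  fin_cases i <;> simp <;> omega

/-! ### The ℤ-linear parametrization -/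

noncomputable def Tm (u : ℂ) (m : Fin 4 → ℤ) : ℂ :=
  ((m 0 : ℂ) * zA + m 1 * zA' + m 2 * zB + m 3 * zB') * u

lemma Tm_sub (u : ℂ) (m n : Fin 4 → ℤ) : Tm u (m - n) = Tm u m - Tm u n := by
  simp only [Tm, Pi.sub_apply]; push_cast; ring

lemma Tm_inj {u : ℂ} (hu : u ≠ 0) {m n : Fin 4 → ℤ} (h : Tm u m = Tm u n) : m = n := by
  have h0 : Tm u (m - n) = 0 := by rw [Tm_sub, h, sub_self]
  rw [Tm] at h0
  rcases mul_eq_zero.mp h0 with h1 | h1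
  · have := indepz (m - n) (by simpa using h1)
    exact sub_eq_zero.mp this
  · exact absurd h1 hu

def mv : Fin 7 → (Fin 4 → ℤ) :=
  ![![1,1,1,1], ![1,0,0,0], ![0,1,0,0], ![0,0,1,0], ![0,0,0,1], ![1,0,-1,0], ![0,1,0,-1]]

lemma Mset_eq (u : ℂ) : Mset u =
    {Tm u (mv 0), Tm u (mv 1), Tm u (mv 2), Tm u (mv 3), Tm u (mv 4), Tm u (mv 5), Tm u (mv 6)} := by
  have e0 : Tm u (mv 0) = u := by
    simp only [Tm, mv, Matrix.cons_val]; norm_num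
    linear_combination u * zrel
  have e1 : Tm u (mv 1) = zA * u := by simp only [Tm, mv, Matrix.cons_val]; norm_num
  have e2 : Tm u (mv 2) = zA' * u := by simp only [Tm, mv, Matrix.cons_val]; norm_num
  have e3 : Tm u (mv 3) = zB * u := by simp only [Tm, mv, Matrix.cons_val]; norm_num
  have e4 : Tm u (mv 4) = zB' * u := by simp only [Tm, mv, Matrix.cons_val]; norm_num
  have e5 : Tm u (mv 5) = zA * u - zB * u := by
    rw [show mv 5 = ![1,0,-1,0] from rfl]; simp only [Tm, Matrix.cons_val]; norm_num; ring
  have e6 : Tm u (mv 6) = zA' * u - zB' * u := by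
    rw [show mv 6 = ![0,1,0,-1] from rfl]; simp only [Tm, Matrix.cons_val]; norm_num; ring
  rw [Mset, rotA, rotA', rotB, rotB', e0, e1, e2, e3, e4, e5, e6]

lemma mem_Mset_iff {u : ℂ} (hu : u ≠ 0) (m : Fin 4 → ℤ) :
    Tm u m ∈ Mset u ↔ (m = mv 0 ∨ m = mv 1 ∨ m = mv 2 ∨ m = mv 3 ∨ m = mv 4 ∨ m = mv 5 ∨ m = mv 6) := by
  rw [Mset_eq]
  simp only [Set.mem_insert_iff, Set.mem_singleton_iff]
  constructor
  · rintro (h|h|h|h|h|h|h) <;> simp [Tm_inj hu h]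
  · rintro (rfl|rfl|rfl|rfl|rfl|rfl|rfl) <;> simp

/-! ### The basis of the span -/

noncomputable def vb (u : ℂ) : Fin 4 → ℂ := ![zA * u, zA' * u, zB * u, zB' * u]

lemma Tm_comb (u : ℂ) (m : Fin 4 → ℤ) :
    Tm u m = m 0 • vb u 0 + m 1 • vb u 1 + m 2 • vb u 2 + m 3 • vb u 3 := by
  simp only [Tm, vb, zsmul_eq_mul, Matrix.cons_val]
  norm_num
  ring

lemma vb_li {u : ℂ} (hu : u ≠ 0) : LinearIndependent ℤ (vb u) := by
  rw [Fintype.linearIndependent_iff]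
  intro g hg
  have hsum : ((g 0 : ℂ) * zA + g 1 * zA' + g 2 * zB + g 3 * zB') * u = 0 := by
    rw [← hg, Fin.sum_univ_four]
    simp only [vb, zsmul_eq_mul, Matrix.cons_val]
    norm_num
    ring
  rcases mul_eq_zero.mp hsum with h1 | h1
  · have := indepz g h1
    intro i; rw [this]; rfl
  · exact absurd h1 hu

lemma vb_mem_Mset (u : ℂ) (i : Fin 4) : vb u i ∈ Mset u := by
  fin_cases i <;>
    simp only [vb, Mset, ← rotA, ← rotA', ← rotB, ← rotB'] <;>
    norm_num [Set.mem_insert_iff]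

lemma span_eq (u : ℂ) :
    Submodule.span ℤ (Mset u) = Submodule.span ℤ (Set.range (vb u)) := by
  apply le_antisymm
  · rw [Submodule.span_le]
    intro x hx
    rw [Mset_eq] at hx
    have hv : ∀ i, vb u i ∈ Submodule.span ℤ (Set.range (vb u)) :=
      fun i => Submodule.subset_span ⟨i, rfl⟩
    rcases hx with h|h|h|h|h|h|h <;> subst h <;> rw [Tm_comb] <;>
      exact Submodule.add_mem _ (Submodule.add_mem _ (Submodule.add_mem _
        (Submodule.smul_mem _ _ (hv 0)) (Submodule.smul_mem _ _ (hv 1)))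
        (Submodule.smul_mem _ _ (hv 2))) (Submodule.smul_mem _ _ (hv 3))
  · rw [Submodule.span_le]
    rintro x ⟨i, rfl⟩
    exact Submodule.subset_span (vb_mem_Mset u i)

noncomputable def bas {u : ℂ} (hu : u ≠ 0) :
    Module.Basis (Fin 4) ℤ (Submodule.span ℤ (Mset u)) :=
  (Module.Basis.span (vb_li hu)).map (LinearEquiv.ofEq _ _ (span_eq u).symm)

lemma bas_coe {u : ℂ} (hu : u ≠ 0) (i : Fin 4) : ((bas hu i : Submodule.span ℤ (Mset u)) : ℂ) = vb u i := by
  simp [bas, Module.Basis.map_apply, Module.Basis.span_apply]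

lemma Tm_mem_span (u : ℂ) (m : Fin 4 → ℤ) : Tm u m ∈ Submodule.span ℤ (Mset u) := by
  rw [span_eq u, Tm_comb]
  have hv : ∀ i, vb u i ∈ Submodule.span ℤ (Set.range (vb u)) :=
    fun i => Submodule.subset_span ⟨i, rfl⟩
  exact Submodule.add_mem _ (Submodule.add_mem _ (Submodule.add_mem _
    (Submodule.smul_mem _ _ (hv 0)) (Submodule.smul_mem _ _ (hv 1)))
    (Submodule.smul_mem _ _ (hv 2))) (Submodule.smul_mem _ _ (hv 3))

/-! ### The coloring map -/

noncomputable def Fc {u : ℂ} (hu : u ≠ 0) :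
    Submodule.span ℤ (Mset u) →ₗ[ℤ] ZMod 4 :=
  (bas hu).constr ℤ ![1, 1, 2, 2]

lemma Fc_Tm {u : ℂ} (hu : u ≠ 0) (m : Fin 4 → ℤ) (z : Submodule.span ℤ (Mset u))
    (hz : (z : ℂ) = Tm u m) :
    Fc hu z = (m 0 : ZMod 4) + (m 1 : ZMod 4) + 2 * (m 2 : ZMod 4) + 2 * (m 3 : ZMod 4) := by
  have hz' : z = m 0 • bas hu 0 + m 1 • bas hu 1 + m 2 • bas hu 2 + m 3 • bas hu 3 := by
    apply Subtype.ext
    push_cast [bas_coe hu]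
    rw [hz, Tm_comb]
  rw [hz']
  simp only [map_add, map_zsmul, Fc, Module.Basis.constr_basis, Matrix.cons_val]
  norm_num [Matrix.cons_val_zero, Matrix.cons_val_one, Matrix.head_cons]
  ring

lemma Mset_cases {u : ℂ} {x : ℂ} (hx : x ∈ Mset u) :
    x = Tm u (mv 0) ∨ x = Tm u (mv 1) ∨ x = Tm u (mv 2) ∨ x = Tm u (mv 3) ∨
    x = Tm u (mv 4) ∨ x = Tm u (mv 5) ∨ x = Tm u (mv 6) := by
  rw [Mset_eq] at hx
  simpa using hx

lemma Fc_ne_zero {u : ℂ} (hu : u ≠ 0) (z : Submodule.span ℤ (Mset u))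
    (hz : (z : ℂ) ∈ Mset u) : Fc hu z ≠ 0 := by
  rcases Mset_cases hz with h|h|h|h|h|h|h <;>
    rw [Fc_Tm hu _ z h] <;> decide

/-! ### The spindle vertices and the endgame -/

def pw : Fin 7 → (Fin 4 → ℤ) :=
  ![![0,0,0,0], ![1,0,0,0], ![0,0,1,0], ![1,0,1,0], ![0,-1,0,0], ![0,0,0,-1], ![0,-1,0,-1]]

def inS (m : Fin 4 → ℤ) : Prop := m ∈ [mv 0, mv 1, mv 2, mv 3, mv 4, mv 5, mv 6]

instance : DecidablePred inS := fun m => by unfold inS; infer_instance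

lemma inS_iff (m : Fin 4 → ℤ) :
    inS m ↔ (m = mv 0 ∨ m = mv 1 ∨ m = mv 2 ∨ m = mv 3 ∨ m = mv 4 ∨ m = mv 5 ∨ m = mv 6) := by
  simp [inS]

lemma VM_adj_iff {u : ℂ} (hu : u ≠ 0) (m n : Fin 4 → ℤ) :
    (VM u).Adj ⟨Tm u m, Tm_mem_span u m⟩ ⟨Tm u n, Tm_mem_span u n⟩ ↔
      (m ≠ n ∧ (inS (m - n) ∨ inS (n - m))) := by
  rw [VM, SimpleGraph.fromRel_adj]
  constructor
  · rintro ⟨hne, h | h⟩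
    · refine ⟨fun he => hne (by rw [he]), Or.inl ?_⟩
      rw [inS_iff, ← mem_Mset_iff hu]
      simpa [← Tm_sub] using h
    · refine ⟨fun he => hne (by rw [he]), Or.inr ?_⟩
      rw [inS_iff, ← mem_Mset_iff hu]
      simpa [← Tm_sub] using h
  · rintro ⟨hne, h | h⟩
    · refine ⟨fun he => hne (Tm_inj hu (by simpa using congrArg Subtype.val he)), Or.inl ?_⟩
      rw [inS_iff, ← mem_Mset_iff hu] at h
      simpa [← Tm_sub] using h
    · refine ⟨fun he => hne (Tm_inj hu (by simpa using congrArg Subtype.val he)), Or.inr ?_⟩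
      rw [inS_iff, ← mem_Mset_iff hu] at h
      simpa [← Tm_sub] using h

def spindleList : List (Fin 7 × Fin 7) :=
  [(0,1),(0,2),(1,2),(1,3),(2,3),(0,4),(0,5),(4,5),(4,6),(5,6),(3,6)]

lemma pw_inj : ∀ i j : Fin 7, pw i = pw j → i = j := by decide

set_option maxRecDepth 100000 in
lemma pw_adj : ∀ i j : Fin 7,
    (pw i ≠ pw j ∧ (inS (pw i - pw j) ∨ inS (pw j - pw i))) ↔
      (i ≠ j ∧ ((i, j) ∈ spindleList ∨ (j, i) ∈ spindleList)) := by decide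

lemma ms_adj (i j : Fin 7) : MoserSpindle.Adj i j ↔
    (i ≠ j ∧ ((i, j) ∈ spindleList ∨ (j, i) ∈ spindleList)) :=
  SimpleGraph.fromRel_adj _ i j

lemma fin3_pigeon (a b c d : Fin 3) (h1 : a ≠ b) (h2 : a ≠ c) (h3 : b ≠ c)
    (h4 : d ≠ b) (h5 : d ≠ c) : d = a := by
  fin_cases a <;> fin_cases b <;> fin_cases c <;> fin_cases d <;> simp_all

lemma no_three_coloring : ¬ MoserSpindle.Colorable 3 := by
  rintro ⟨C3⟩
  have adj : ∀ i j : Fin 7, (i ≠ j ∧ ((i, j) ∈ spindleList ∨ (j, i) ∈ spindleList)) →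
      C3 i ≠ C3 j := fun i j h => C3.valid ((SimpleGraph.fromRel_adj _ i j).mpr h)
  have h01 := adj 0 1 (by decide)
  have h02 := adj 0 2 (by decide)
  have h12 := adj 1 2 (by decide)
  have h13 := adj 1 3 (by decide)
  have h23 := adj 2 3 (by decide)
  have h04 := adj 0 4 (by decide)
  have h05 := adj 0 5 (by decide)
  have h45 := adj 4 5 (by decide)
  have h46 := adj 4 6 (by decide)
  have h56 := adj 5 6 (by decide)
  have h36 := adj 3 6 (by decide)
  have hd : C3 3 = C3 0 :=
    fin3_pigeon (C3 0) (C3 1) (C3 2) (C3 3) h01 h02 h12 (fun h => h13 h.symm) (fun h => h23 h.symm)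
  have he : C3 6 = C3 0 :=
    fin3_pigeon (C3 0) (C3 4) (C3 5) (C3 6) h04 h05 h45 (fun h => h46 h.symm) (fun h => h56 h.symm)
  exact h36 (hd.trans he.symm)

theorem stmt11 (u : ℂ) (hu : ‖u‖ = 1) :
    Nonempty (MoserSpindle ↪g VM u) ∧ (VM u).chromaticNumber = 4 := by
  have hu0 : u ≠ 0 := by intro h; rw [h] at hu; simp at hu
  -- the embedding
  have emb : MoserSpindle ↪g VM u := by
    refine ⟨⟨fun i => ⟨Tm u (pw i), Tm_mem_span u (pw i)⟩, ?_⟩, ?_⟩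
    · intro i j h
      exact pw_inj i j (Tm_inj hu0 (by simpa using congrArg Subtype.val h))
    · intro i j
      exact (VM_adj_iff hu0 (pw i) (pw j)).trans ((pw_adj i j).trans (ms_adj i j).symm)
  -- the coloring
  have C : (VM u).Coloring (ZMod 4) := by
    refine SimpleGraph.Coloring.mk (fun x => Fc hu0 x) ?_
    intro x y hxy
    rw [VM, SimpleGraph.fromRel_adj] at hxy
    obtain ⟨hne, h | h⟩ := hxy
    · intro heq
      refine Fc_ne_zero hu0 (x - y) (by simpa using h) ?_
      rw [map_sub, heq, sub_self]
    · intro heq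
      refine Fc_ne_zero hu0 (y - x) (by simpa using h) ?_
      rw [map_sub, heq, sub_self]
  have hcol4 : (VM u).Colorable 4 := by
    have := C.colorable
    rwa [ZMod.card] at this
  have hnc3 : ¬ MoserSpindle.Colorable 3 := no_three_coloring
  have hVM3 : ¬ (VM u).Colorable 3 := fun h => hnc3 (h.of_hom emb.toHom)
  refine ⟨⟨emb⟩, le_antisymm ?_ ?_⟩
  · exact_mod_cast hcol4.chromaticNumber_le
  · have h3 : ¬ ((VM u).chromaticNumber ≤ (3:ℕ)) := fun hc =>
      hVM3 (SimpleGraph.chromaticNumber_le_iff_colorable.mp hc)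
    have hlt := not_le.mp h3
    have h4 := (ENat.add_one_le_iff (by simp : ((3:ℕ):ℕ∞) ≠ ⊤)).mpr hlt
    calc (4:ℕ∞) = ((3:ℕ):ℕ∞) + 1 := by norm_num
    _ ≤ _ := h4
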